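/- Let n ≥ 1, let U be an open subset of ℂⁿ (identified with Fin n → ℂ, carrying its Lebesgue volume measure), and let K ⊆ U be compact. Then there exists a constant C > 0 such that for every function f : ℂⁿ → ℂ that is complex-differentiable at every point of U and every z ∈ K, one has ‖f z‖² ≤ C · ∫_U ‖f w‖² dw (an inequality in [0, ∞], using the lower Lebesgue integral on the right). In particular, the supremum of ‖f‖ over K is bounded by C^{1/2} times the L²-norm of f on U. -/

import Mathlib

open MeasureTheory Metric Set Real

lemma circle_mean (g : ℂ → ℂ) (c : ℂ) (ρ : ℝ) (hρ : 0 < ρ)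
    (hd : DiffContOnCl ℂ g (ball c ρ)) :
    2 * π * ‖g c‖ ≤ ∫ θ in (0:ℝ)..(2*π), ‖g (circleMap c ρ θ)‖ := by
  have h := hd.circleIntegral_sub_inv_smul (mem_ball_self hρ)
  have h2 : ‖(2 * π * Complex.I : ℂ) • g c‖ = 2 * π * ‖g c‖ := by
    simp [norm_smul, abs_of_pos pi_pos, mul_comm]
  calc 2 * π * ‖g c‖ = ‖∮ z in C(c, ρ), (z - c)⁻¹ • g z‖ := by rw [h, h2]
    _ ≤ ∫ θ in (0:ℝ)..(2*π),
        ‖deriv (circleMap c ρ) θ • ((circleMap c ρ θ - c)⁻¹ • g (circleMap c ρ θ))‖ := by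
        apply intervalIntegral.norm_integral_le_integral_norm (by positivity)
    _ = ∫ θ in (0:ℝ)..(2*π), ‖g (circleMap c ρ θ)‖ := by
        apply intervalIntegral.integral_congr
        intro θ _
        simp [deriv_circleMap, norm_smul, circleMap_sub_center, abs_of_pos hρ]
        field_simp

lemma disc_mean (g : ℂ → ℂ) (c : ℂ) (r : ℝ) (hr : 0 < r)
    (hc : ContinuousOn g (closedBall c r)) (hd : DifferentiableOn ℂ g (ball c r)) :
    π * r ^ 2 * ‖g c‖ ≤ ∫ w in closedBall c r, ‖g w‖ := by
  set T : ℝ × ℝ → ℂ := fun p => circleMap c p.1 p.2 with hT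
  have key : ∀ p : ℝ × ℝ, c + Complex.polarCoord.symm p = T p := by
    intro p
    simp [hT, circleMap, Complex.polarCoord_symm_apply, Complex.exp_mul_I]
  -- change of variables
  have cov := Complex.integral_comp_polarCoord_symm
    (fun w => (closedBall (0:ℂ) r).indicator (fun w => ‖g (c + w)‖) w)
  -- RHS of cov equals the target integral
  have hrhs : (∫ p : ℂ, (closedBall (0:ℂ) r).indicator (fun w => ‖g (c + w)‖) p)
      = ∫ w in closedBall c r, ‖g w‖ := by
    have hind : ∀ x : ℂ, (closedBall (0:ℂ) r).indicator (fun w => ‖g (c + w)‖) x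
        = ((closedBall c r).indicator (fun w => ‖g w‖)) (c + x) := by
      intro x
      have hmem : c + x ∈ closedBall c r ↔ x ∈ closedBall (0:ℂ) r := by
        simp [dist_eq_norm]
      by_cases hx : x ∈ closedBall (0:ℂ) r
      · rw [indicator_of_mem hx, indicator_of_mem (hmem.2 hx)]
      · rw [indicator_of_notMem hx, indicator_of_notMem (fun h => hx (hmem.1 h))]
    calc (∫ p : ℂ, (closedBall (0:ℂ) r).indicator (fun w => ‖g (c + w)‖) p)
        = ∫ p : ℂ, ((closedBall c r).indicator (fun w => ‖g w‖)) (c + p) := by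
          simp_rw [hind]
      _ = ∫ p : ℂ, ((closedBall c r).indicator (fun w => ‖g w‖)) p :=
          integral_add_left_eq_self _ c
      _ = ∫ w in closedBall c r, ‖g w‖ := integral_indicator measurableSet_closedBall
  -- LHS of cov equals integral over Ioc 0 r ×ˢ Ioo (-π) π
  have hlhs : (∫ p in polarCoord.target,
        p.1 • (closedBall (0:ℂ) r).indicator (fun w => ‖g (c + w)‖) (Complex.polarCoord.symm p))
      = ∫ p in Ioc 0 r ×ˢ Ioo (-π) π, p.1 * ‖g (T p)‖ := by
    have h1 : ∀ p ∈ polarCoord.target,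
        p.1 • (closedBall (0:ℂ) r).indicator (fun w => ‖g (c + w)‖) (Complex.polarCoord.symm p)
        = (Ioc (0:ℝ) r ×ˢ (univ : Set ℝ)).indicator (fun p => p.1 * ‖g (T p)‖) p := by
      intro p hp
      rw [polarCoord_target] at hp
      have hp1 : 0 < p.1 := hp.1
      have hmem : Complex.polarCoord.symm p ∈ closedBall (0:ℂ) r ↔ p ∈ Ioc (0:ℝ) r ×ˢ (univ : Set ℝ) := by
        simp only [mem_closedBall, dist_zero_right,
          Complex.norm_polarCoord_symm, abs_of_pos hp1, mem_prod, mem_univ, and_true,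
          mem_Ioc]
        exact ⟨fun h => ⟨hp1, h⟩, fun h => h.2⟩
      by_cases hx : Complex.polarCoord.symm p ∈ closedBall (0:ℂ) r
      · rw [indicator_of_mem hx, indicator_of_mem (hmem.1 hx)]
        have : c + Complex.polarCoord.symm p = T p := key p
        rw [smul_eq_mul]
        congr 1
        rw [← this]
      · rw [indicator_of_notMem hx, indicator_of_notMem (fun h => hx (hmem.2 h)), smul_zero]
    rw [setIntegral_congr_fun polarCoord.open_target.measurableSet h1,
      setIntegral_indicator (measurableSet_Ioc.prod MeasurableSet.univ)]
    congr 1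
    rw [polarCoord_target, prod_inter_prod, inter_univ,
      inter_eq_right.2 (Ioc_subset_Ioi_self)]
  rw [hrhs, hlhs] at cov
  rw [← cov]
  -- continuity and integrability of the polar integrand
  have hTcont : Continuous T := by
    have : Continuous fun p : ℝ × ℝ => c + (p.1 : ℂ) * Complex.exp (p.2 * Complex.I) := by
      fun_prop
    simpa [hT, circleMap] using this
  have hmaps : MapsTo T (Icc 0 r ×ˢ Icc (-π) π) (closedBall c r) := by
    intro p hp
    have hd : dist (T p) c = |p.1| := by
      simp [hT, dist_eq_norm, circleMap_sub_center]
    rw [mem_closedBall, hd, abs_of_nonneg hp.1.1]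
    exact hp.1.2
  have hFcont : ContinuousOn (fun p : ℝ × ℝ => p.1 * ‖g (T p)‖) (Icc 0 r ×ˢ Icc (-π) π) :=
    (continuous_fst.continuousOn).mul ((hc.comp hTcont.continuousOn hmaps).norm)
  have hInt : IntegrableOn (fun p : ℝ × ℝ => p.1 * ‖g (T p)‖) (Ioc 0 r ×ˢ Ioo (-π) π) :=
    (hFcont.integrableOn_compact (isCompact_Icc.prod isCompact_Icc)).mono_set
      (prod_mono Ioc_subset_Icc_self Ioo_subset_Icc_self)
  have hvol : (volume : Measure (ℝ × ℝ)).restrict (Ioc 0 r ×ˢ Ioo (-π) π)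
      = ((volume : Measure ℝ).restrict (Ioc 0 r)).prod
          ((volume : Measure ℝ).restrict (Ioo (-π) π)) := by
    exact (Measure.prod_restrict _ _).symm
  have hInt' : Integrable (fun p : ℝ × ℝ => p.1 * ‖g (T p)‖)
      (((volume : Measure ℝ).restrict (Ioc 0 r)).prod
        ((volume : Measure ℝ).restrict (Ioo (-π) π))) := by
    rw [← hvol]
    exact hInt
  have fub : (∫ p in Ioc 0 r ×ˢ Ioo (-π) π, p.1 * ‖g (T p)‖)
      = ∫ x in Ioc 0 r, ∫ θ in Ioo (-π) π, x * ‖g (circleMap c x θ)‖ := by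
    rw [show (∫ p in Ioc 0 r ×ˢ Ioo (-π) π, p.1 * ‖g (T p)‖)
        = ∫ p, p.1 * ‖g (T p)‖ ∂(((volume : Measure ℝ).restrict (Ioc 0 r)).prod
          ((volume : Measure ℝ).restrict (Ioo (-π) π))) from by rw [← hvol]]
    exact integral_prod _ hInt'
  have inner_bd : ∀ x ∈ Ioc (0:ℝ) r,
      x * (2 * π * ‖g c‖) ≤ ∫ θ in Ioo (-π) π, x * ‖g (circleMap c x θ)‖ := by
    intro x hx
    have hx0 : 0 < x := hx.1
    have hdc : DiffContOnCl ℂ g (ball c x) := ⟨hd.mono (ball_subset_ball hx.2),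
      hc.mono (closure_ball_subset_closedBall.trans (closedBall_subset_closedBall hx.2))⟩
    have hper : Function.Periodic (fun θ => ‖g (circleMap c x θ)‖) (2*π) :=
      fun θ => by simp [periodic_circleMap c x θ]
    have h1 : (∫ θ in Ioo (-π) π, ‖g (circleMap c x θ)‖)
        = ∫ θ in (0:ℝ)..(2*π), ‖g (circleMap c x θ)‖ := by
      have h2 := hper.intervalIntegral_add_eq (-π) 0
      rw [show -π + 2*π = π by ring, zero_add] at h2
      rw [← integral_Ioc_eq_integral_Ioo,
        ← intervalIntegral.integral_of_le (by linarith [pi_pos] : -π ≤ π), h2]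
    calc x * (2*π*‖g c‖) ≤ x * ∫ θ in (0:ℝ)..(2*π), ‖g (circleMap c x θ)‖ :=
        mul_le_mul_of_nonneg_left (circle_mean g c x hx0 hdc) hx0.le
      _ = ∫ θ in Ioo (-π) π, x * ‖g (circleMap c x θ)‖ := by
        rw [← h1]
        exact (integral_const_mul x _).symm
  have houter : IntegrableOn (fun x => ∫ θ in Ioo (-π) π, x * ‖g (circleMap c x θ)‖)
      (Ioc 0 r) := hInt'.integral_prod_left
  calc π * r^2 * ‖g c‖ = (∫ x in Ioc 0 r, x) * (2*π*‖g c‖) := by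
        rw [← intervalIntegral.integral_of_le hr.le, integral_id]
        ring
    _ = ∫ x in Ioc 0 r, x * (2*π*‖g c‖) := (integral_mul_const _ _).symm
    _ ≤ ∫ x in Ioc 0 r, ∫ θ in Ioo (-π) π, x * ‖g (circleMap c x θ)‖ :=
        setIntegral_mono_on
          ((continuous_id.mul continuous_const).integrableOn_Ioc)
          houter measurableSet_Ioc inner_bd
    _ = ∫ p in Ioc 0 r ×ˢ Ioo (-π) π, p.1 * ‖g (T p)‖ := fub.symm

lemma disc_mean_ennreal (g : ℂ → ℂ) (c : ℂ) (r : ℝ) (hr : 0 < r)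
    (hg : ∀ z ∈ closedBall c r, DifferentiableAt ℂ g z) :
    ENNReal.ofReal (π * r ^ 2) * ‖g c‖₊ ≤ ∫⁻ w in closedBall c r, (‖g w‖₊ : ENNReal) := by
  have hc : ContinuousOn g (closedBall c r) := fun z hz =>
    (hg z hz).continuousAt.continuousWithinAt
  have hd : DifferentiableOn ℂ g (ball c r) := fun z hz =>
    (hg z (ball_subset_closedBall hz)).differentiableWithinAt
  have hle := disc_mean g c r hr hc hd
  have hint : IntegrableOn (fun w => ‖g w‖) (closedBall c r) :=
    (hc.norm).integrableOn_compact (isCompact_closedBall c r)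
  have heq : ENNReal.ofReal (∫ w in closedBall c r, ‖g w‖)
      = ∫⁻ w in closedBall c r, (‖g w‖₊ : ENNReal) := by
    rw [ofReal_integral_eq_lintegral_ofReal hint (ae_of_all _ fun w => norm_nonneg _)]
    simp_rw [ofReal_norm, enorm_eq_nnnorm]
  calc ENNReal.ofReal (π * r^2) * ‖g c‖₊ = ENNReal.ofReal (π * r^2 * ‖g c‖) := by
        rw [← enorm_eq_nnnorm, ← ofReal_norm, ← ENNReal.ofReal_mul (by positivity)]
    _ ≤ ENNReal.ofReal (∫ w in closedBall c r, ‖g w‖) := ENNReal.ofReal_le_ofReal hle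
    _ = _ := heq

lemma polydisc_mean : ∀ (n : ℕ) (g : (Fin n → ℂ) → ℂ) (c : Fin n → ℂ) (r : ℝ), 0 < r →
    (∀ z ∈ closedBall c r, DifferentiableAt ℂ g z) →
    ENNReal.ofReal (π * r ^ 2) ^ n * ‖g c‖₊ ≤ ∫⁻ w in closedBall c r, (‖g w‖₊ : ENNReal) := by
  intro n
  induction n with
  | zero =>
    intro g c r hr hg
    have huniv : closedBall c r = univ := eq_univ_of_forall fun x => by
      simp [mem_closedBall, Subsingleton.elim x c, hr.le]
    rw [huniv, Measure.restrict_univ]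
    have hcg : ∀ w : Fin 0 → ℂ, g w = g c := fun w => by rw [Subsingleton.elim w c]
    simp_rw [hcg]
    rw [lintegral_const]
    simp [MeasureTheory.volume_pi]
  | succ n ih =>
    intro g c r hr hg
    set e := MeasurableEquiv.piFinSuccAbove (fun _ : Fin (n+1) => ℂ) 0 with he
    have key := (volume_preserving_piFinSuccAbove (fun _ : Fin (n+1) => ℂ) 0).symm
    have hsymm : ∀ p : ℂ × (Fin n → ℂ), e.symm p = Fin.cons p.1 p.2 := by
      intro p
      show (Fin.insertNthEquiv (fun _ : Fin (n+1) => ℂ) 0) p = Fin.cons p.1 p.2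
      simp [Fin.insertNthEquiv, Fin.insertNth_zero']
    have hcons : ∀ (x : ℂ) (y : Fin n → ℂ), (Fin.cons x y : Fin (n+1) → ℂ) ∈ closedBall c r ↔
        (x ∈ closedBall (c 0) r ∧ y ∈ closedBall (Fin.tail c) r) := by
      intro x y
      rw [mem_closedBall, mem_closedBall, mem_closedBall, dist_pi_le_iff hr.le,
        dist_pi_le_iff hr.le]
      constructor
      · intro h
        exact ⟨by simpa using h 0, fun j => by simpa [Fin.tail] using h j.succ⟩
      · rintro ⟨h0, h1⟩ i
        refine Fin.cases ?_ ?_ i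
        · simpa using h0
        · intro j
          simpa [Fin.tail] using h1 j
    have himg : e.symm '' (closedBall (c 0) r ×ˢ closedBall (Fin.tail c) r)
        = closedBall c r := by
      ext w
      constructor
      · rintro ⟨p, hp, rfl⟩
        rw [hsymm]
        exact (hcons p.1 p.2).2 ⟨hp.1, hp.2⟩
      · intro hw
        refine ⟨e w, ?_, e.symm_apply_apply w⟩
        have hw' : (Fin.cons (w 0) (Fin.tail w) : Fin (n+1) → ℂ) ∈ closedBall c r := by
          rw [Fin.cons_self_tail]; exact hw
        have := (hcons (w 0) (Fin.tail w)).1 hw'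
        have hew : e w = (w 0, Fin.tail w) := by
          show ((Fin.insertNthEquiv (fun _ : Fin (n+1) => ℂ) 0).symm) w = _
          simp [Fin.insertNthEquiv, Fin.removeNth_zero]
        rw [hew]
        exact ⟨this.1, this.2⟩
    have hgc : ContinuousOn g (closedBall c r) := fun z hz =>
      (hg z hz).continuousAt.continuousWithinAt
    have hφ : Continuous (fun p : ℂ × (Fin n → ℂ) => (Fin.cons p.1 p.2 : Fin (n+1) → ℂ)) := by
      refine continuous_pi fun i => ?_
      refine Fin.cases ?_ ?_ i
      · simpa using continuous_fst
      · intro j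
        simpa [Function.comp_def] using (continuous_apply j).comp continuous_snd
    have hmaps : MapsTo (fun p : ℂ × (Fin n → ℂ) => (Fin.cons p.1 p.2 : Fin (n+1) → ℂ))
        (closedBall (c 0) r ×ˢ closedBall (Fin.tail c) r) (closedBall c r) := by
      intro p hp
      exact (hcons p.1 p.2).2 ⟨hp.1, hp.2⟩
    have hmeas : AEMeasurable (fun p : ℂ × (Fin n → ℂ) => (‖g (Fin.cons p.1 p.2)‖₊ : ENNReal))
        (((volume : Measure ℂ).restrict (closedBall (c 0) r)).prod
          ((volume : Measure (Fin n → ℂ)).restrict (closedBall (Fin.tail c) r))) := by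
      rw [Measure.prod_restrict]
      have hcont : ContinuousOn (fun p : ℂ × (Fin n → ℂ) => (‖g (Fin.cons p.1 p.2)‖₊ : NNReal))
          (closedBall (c 0) r ×ˢ closedBall (Fin.tail c) r) :=
        (hgc.comp hφ.continuousOn hmaps).nnnorm
      exact measurable_coe_nnreal_ennreal.comp_aemeasurable
        (hcont.aemeasurable (measurableSet_closedBall.prod measurableSet_closedBall))
    have hsplit : (∫⁻ w in closedBall c r, (‖g w‖₊ : ENNReal))
        = ∫⁻ x in closedBall (c 0) r, ∫⁻ y in closedBall (Fin.tail c) r,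
            (‖g (Fin.cons x y)‖₊ : ENNReal) := by
      rw [← himg, ← key.setLIntegral_comp_emb e.symm.measurableEmbedding
        (fun w => (‖g w‖₊ : ENNReal)) _]
      simp_rw [show ∀ p : ℂ × (Fin n → ℂ), (MeasurableEquiv.piFinSuccAbove (fun _ : Fin (n+1) => ℂ) 0).symm p
          = Fin.cons p.1 p.2 from hsymm]
      rw [show (volume : Measure (ℂ × (Fin n → ℂ))).restrict
          (closedBall (c 0) r ×ˢ closedBall (Fin.tail c) r)
        = ((volume : Measure ℂ).restrict (closedBall (c 0) r)).prod
            ((volume : Measure (Fin n → ℂ)).restrict (closedBall (Fin.tail c) r))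
        from (Measure.prod_restrict _ _).symm]
      exact lintegral_prod _ hmeas
    have hinner : ∀ x ∈ closedBall (c 0) r,
        ENNReal.ofReal (π*r^2) ^ n * ‖g (Fin.cons x (Fin.tail c))‖₊
          ≤ ∫⁻ y in closedBall (Fin.tail c) r, (‖g (Fin.cons x y)‖₊ : ENNReal) := by
      intro x hx
      refine ih (fun y => g (Fin.cons x y)) (Fin.tail c) r hr ?_
      intro y hy
      have h1 : DifferentiableAt ℂ g (Fin.cons x y) := hg _ ((hcons x y).2 ⟨hx, hy⟩)
      have h2 : DifferentiableAt ℂ (fun y : Fin n → ℂ => (Fin.cons x y : Fin (n+1) → ℂ)) y := by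
        rw [differentiableAt_pi]
        intro i
        refine Fin.cases ?_ ?_ i
        · simpa using (differentiableAt_const x)
        · intro j
          simp only [Fin.cons_succ]
          exact (ContinuousLinearMap.proj j : (Fin n → ℂ) →L[ℂ] ℂ).differentiableAt
      exact h1.comp y h2
    have houter : ENNReal.ofReal (π*r^2) * ‖g c‖₊
        ≤ ∫⁻ x in closedBall (c 0) r, (‖g (Fin.cons x (Fin.tail c))‖₊ : ENNReal) := by
      have hdiff : ∀ x ∈ closedBall (c 0) r,
          DifferentiableAt ℂ (fun x : ℂ => g (Fin.cons x (Fin.tail c))) x := by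
        intro x hx
        have h1 : DifferentiableAt ℂ g (Fin.cons x (Fin.tail c)) :=
          hg _ ((hcons _ _).2 ⟨hx, mem_closedBall_self hr.le⟩)
        have h2 : DifferentiableAt ℂ
            (fun x : ℂ => (Fin.cons x (Fin.tail c) : Fin (n+1) → ℂ)) x := by
          rw [differentiableAt_pi]
          intro i
          refine Fin.cases ?_ ?_ i
          · simpa using differentiableAt_id'
          · intro j
            simpa using (differentiableAt_const (Fin.tail c j))
        exact h1.comp x h2
      have := disc_mean_ennreal (fun x => g (Fin.cons x (Fin.tail c))) (c 0) r hr hdiff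
      simpa [Fin.cons_self_tail] using this
    calc ENNReal.ofReal (π*r^2)^(n+1) * ‖g c‖₊
        = ENNReal.ofReal (π*r^2)^n * (ENNReal.ofReal (π*r^2) * (‖g c‖₊ : ENNReal)) := by
          ring
      _ ≤ ENNReal.ofReal (π*r^2)^n
            * ∫⁻ x in closedBall (c 0) r, (‖g (Fin.cons x (Fin.tail c))‖₊ : ENNReal) :=
          mul_le_mul_right houter _
      _ = ∫⁻ x in closedBall (c 0) r,
            ENNReal.ofReal (π*r^2)^n * (‖g (Fin.cons x (Fin.tail c))‖₊ : ENNReal) :=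
          (lintegral_const_mul' _ _ (ENNReal.pow_ne_top ENNReal.ofReal_ne_top)).symm
      _ ≤ ∫⁻ x in closedBall (c 0) r, ∫⁻ y in closedBall (Fin.tail c) r,
            (‖g (Fin.cons x y)‖₊ : ENNReal) :=
          lintegral_mono_ae ((ae_restrict_mem measurableSet_closedBall).mono hinner)
      _ = ∫⁻ w in closedBall c r, (‖g w‖₊ : ENNReal) := hsplit.symm

/-- Bergman-type inequality: for `U ⊆ ℂⁿ` open and `K ⊆ U` compact there is a
constant `C > 0` such that every function holomorphic on `U` satisfies
`‖f z‖² ≤ C · ∫⁻_U ‖f‖²` for all `z ∈ K`. -/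
theorem stmt_5 (n : ℕ) (hn : 1 ≤ n) (U : Set (Fin n → ℂ)) (hU : IsOpen U)
    (K : Set (Fin n → ℂ)) (hK : IsCompact K) (hKU : K ⊆ U) :
    ∃ C : ℝ, 0 < C ∧ ∀ f : (Fin n → ℂ) → ℂ,
      (∀ z ∈ U, DifferentiableAt ℂ f z) →
      ∀ z ∈ K,
        (‖f z‖₊ : ENNReal) ^ 2 ≤
          ENNReal.ofReal C * ∫⁻ w in U, (‖f w‖₊ : ENNReal) ^ 2 := by
  obtain ⟨δ, hδ, hthick⟩ := hK.exists_thickening_subset_open hU hKU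
  set r : ℝ := δ / 2 with hrdef
  have hr : 0 < r := by positivity
  have hball : ∀ z ∈ K, closedBall z r ⊆ U := by
    intro z hz
    have h1 : closedBall z r ⊆ ball z δ :=
      closedBall_subset_ball (by rw [hrdef]; linarith)
    exact h1.trans ((ball_subset_thickening hz δ).trans hthick)
  have hA : (0:ℝ) < π * r ^ 2 := by positivity
  refine ⟨((π * r ^ 2) ^ n)⁻¹, by positivity, ?_⟩
  intro f hf z hz
  set g : (Fin n → ℂ) → ℂ := fun w => (f w) ^ 2 with hgdef
  have hgd : ∀ w ∈ closedBall z r, DifferentiableAt ℂ g w := fun w hw =>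
    ((hf w (hball z hz hw))).pow 2
  have hmean := polydisc_mean n g z r hr hgd
  have hnorm : ∀ w, (‖g w‖₊ : ENNReal) = (‖f w‖₊ : ENNReal) ^ 2 := by
    intro w
    rw [hgdef]
    push_cast [nnnorm_pow]
    rfl
  have hmono : (∫⁻ w in closedBall z r, (‖g w‖₊ : ENNReal))
      ≤ ∫⁻ w in U, (‖f w‖₊ : ENNReal) ^ 2 := by
    simp_rw [hnorm]
    exact lintegral_mono_set (hball z hz)
  have hAn0 : (ENNReal.ofReal (π * r ^ 2)) ^ n ≠ 0 := by
    simp [ENNReal.ofReal_eq_zero, not_le, hA]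
  have hAntop : (ENNReal.ofReal (π * r ^ 2)) ^ n ≠ ⊤ := ENNReal.pow_ne_top ENNReal.ofReal_ne_top
  have hCeq : ENNReal.ofReal ((π * r ^ 2) ^ n)⁻¹
      = ((ENNReal.ofReal (π * r ^ 2)) ^ n)⁻¹ := by
    rw [ENNReal.ofReal_inv_of_pos (by positivity), ENNReal.ofReal_pow hA.le]
  rw [hCeq]
  have hkey : (ENNReal.ofReal (π * r ^ 2)) ^ n * ((‖f z‖₊ : ENNReal) ^ 2)
      ≤ ∫⁻ w in U, (‖f w‖₊ : ENNReal) ^ 2 := by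
    calc (ENNReal.ofReal (π * r ^ 2)) ^ n * ((‖f z‖₊ : ENNReal) ^ 2)
        = (ENNReal.ofReal (π * r ^ 2)) ^ n * (‖g z‖₊ : ENNReal) := by rw [hnorm]
      _ ≤ ∫⁻ w in closedBall z r, (‖g w‖₊ : ENNReal) := hmean
      _ ≤ _ := hmono
  calc (‖f z‖₊ : ENNReal) ^ 2
      = ((ENNReal.ofReal (π * r ^ 2)) ^ n)⁻¹
          * ((ENNReal.ofReal (π * r ^ 2)) ^ n * ((‖f z‖₊ : ENNReal) ^ 2)) := by
        rw [← mul_assoc, ENNReal.inv_mul_cancel hAn0 hAntop, one_mul]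
    _ ≤ ((ENNReal.ofReal (π * r ^ 2)) ^ n)⁻¹ * ∫⁻ w in U, (‖f w‖₊ : ENNReal) ^ 2 :=
        mul_le_mul_right hkey _
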